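/- Let P be a positive definite diagonal n×n matrix, R a symmetric n×n matrix, and D a diagonal matrix with entries in [0,g]. If (2-β)P - (g/2)R² ⪰ 0 for some β ∈ (0,2) and PDP ≻ 0, then the block matrix [[(2-β)P, -RDP],[-PDR, 2PDP]] is positive semidefinite. -/

import Mathlib

open Matrix

/-- Let `P` be a positive definite diagonal matrix, `R` symmetric, and `D` diagonal with
entries in `[0, g]`. If `(2-β)P - (g/2)R² ⪰ 0` for some `β ∈ (0,2)` and `PDP ≻ 0`, then
the block matrix `[[(2-β)P, -RDP],[-PDR, 2PDP]]` is positive semidefinite. -/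
theorem stmt11 {n : ℕ} (P R D : Matrix (Fin n) (Fin n) ℝ) (g β : ℝ)
    (hPdiag : P.IsDiag) (hPpos : ∀ i, 0 < P i i)
    (hR : Rᵀ = R)
    (hDdiag : D.IsDiag) (hD : ∀ i, 0 ≤ D i i ∧ D i i ≤ g)
    (hβ : 0 < β) (hβ2 : β < 2)
    (hschur : ((2 - β) • P - (g / 2) • (R * R)).PosSemidef)
    (hPDP : (P * D * P).PosDef) :
    (Matrix.fromBlocks ((2 - β) • P) (-(R * D * P)) (-(P * D * R))
      ((2 : ℝ) • (P * D * P))).PosSemidef := by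
  have hPd : P = diagonal P.diag := hPdiag.diagonal_diag.symm
  have hDd : D = diagonal D.diag := hDdiag.diagonal_diag.symm
  have h1 : ∀ M : Matrix (Fin n) (Fin n) ℝ, Mᴴ = Mᵀ := fun M => by ext i j; simp
  -- P*D*P as a diagonal matrix
  have hPDPd : P * D * P = diagonal (fun i => P.diag i * D.diag i * P.diag i) := by
    conv_lhs => rw [hPd, hDd]
    simp [diagonal_mul_diagonal]
  have hDpos : ∀ i, 0 < D.diag i := by
    intro i
    have := (posDef_diagonal_iff.mp (hPDPd ▸ hPDP)) i
    have hp : 0 < P.diag i := hPpos i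
    nlinarith [this, hp, mul_pos hp hp]
  -- the 2,2 block as diagonal
  have hQd : (2 : ℝ) • (P * D * P)
      = diagonal (fun i => 2 * (P.diag i * D.diag i * P.diag i)) := by
    rw [hPDPd, ← diagonal_smul]
    congr 1
  have hQpos : ((2 : ℝ) • (P * D * P)).PosDef := by
    rw [hQd]
    refine posDef_diagonal_iff.mpr fun i => ?_
    have h2 : 0 < P.diag i := hPpos i
    have h3 := hDpos i
    positivity
  haveI := hQpos.isUnit.invertible
  have hBH : (-(R * D * P))ᴴ = -(P * D * R) := by
    rw [conjTranspose_neg, conjTranspose_mul, conjTranspose_mul, h1, h1, h1, hR]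
    conv_lhs => rw [hPd, hDd, diagonal_transpose, diagonal_transpose, ← hPd, ← hDd]
    rw [Matrix.mul_assoc]
  rw [← hBH, PosDef.fromBlocks₂₂ _ _ hQpos, hBH]
  simp only [Matrix.neg_mul, Matrix.mul_neg, neg_neg]
  -- compute the Schur complement
  have hQinv : ((2 : ℝ) • (P * D * P))⁻¹
      = diagonal (fun i => (2 * (P.diag i * D.diag i * P.diag i))⁻¹) := by
    apply Matrix.inv_eq_right_inv
    rw [hQd, diagonal_mul_diagonal]
    have he : (fun i => (2 * (P.diag i * D.diag i * P.diag i))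
        * (2 * (P.diag i * D.diag i * P.diag i))⁻¹) = fun _ => (1 : ℝ) := by
      funext i
      have hp : P i i ≠ 0 := ne_of_gt (hPpos i)
      have hd : D i i ≠ 0 := ne_of_gt (hDpos i)
      have hp' : P.diag i ≠ 0 := hp
      have hd' : D.diag i ≠ 0 := hd
      field_simp
    rw [he, diagonal_one]
  have hmid : D * P * ((2 : ℝ) • (P * D * P))⁻¹ * (P * D) = (2 : ℝ)⁻¹ • D := by
    rw [hQinv]
    conv_lhs => rw [hPd, hDd]
    conv_rhs => rw [hDd, ← diagonal_smul]
    simp only [diagonal_mul_diagonal]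
    refine congrArg diagonal (funext fun i => ?_)
    have hp : P i i ≠ 0 := ne_of_gt (hPpos i)
    have hd : D i i ≠ 0 := ne_of_gt (hDpos i)
    simp only [Pi.smul_apply, smul_eq_mul]
    simp only [diag_diagonal]
    have hp' : P.diag i ≠ 0 := hp
    have hd' : D.diag i ≠ 0 := hd
    field_simp
  have hkey : R * D * P * ((2 : ℝ) • (P * D * P))⁻¹ * (P * D * R)
      = R * ((2 : ℝ)⁻¹ • D) * R := by
    rw [← hmid]
    noncomm_ring
  rw [hkey]
  -- decompose and conclude positive semidefiniteness
  have hdec : (2 - β) • P - R * ((2 : ℝ)⁻¹ • D) * R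
      = ((2 - β) • P - (g / 2) • (R * R)) + Rᴴ * ((g / 2) • 1 - (2 : ℝ)⁻¹ • D) * R := by
    rw [h1, hR, Matrix.mul_sub, Matrix.sub_mul]
    have h2 : R * ((g / 2) • (1 : Matrix (Fin n) (Fin n) ℝ)) * R = (g / 2) • (R * R) := by
      rw [mul_smul_comm, smul_mul_assoc, Matrix.mul_one]
    rw [h2]
    abel
  rw [hdec]
  refine hschur.add (PosSemidef.conjTranspose_mul_mul_same ?_ R)
  have : (g / 2) • (1 : Matrix (Fin n) (Fin n) ℝ) - (2 : ℝ)⁻¹ • D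
      = diagonal (fun i => g / 2 - (2 : ℝ)⁻¹ • D.diag i) := by
    conv_lhs => rw [hDd, ← diagonal_one, ← diagonal_smul, ← diagonal_smul, diagonal_sub]
    congr 1
    funext i
    simp
  rw [this]
  refine posSemidef_diagonal_iff.mpr fun i => ?_
  have hdg : D.diag i ≤ g := (hD i).2
  simp only [smul_eq_mul]
  linarith
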